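/- Let S be compact on L²([0,1]) with ‖S‖ < 1, g⁰(t) = 1_{[0,t]}, and g(t) = (I+S)g⁰(t). Then for distinct pairs (t_{k-1}, t_k) and (t_{l-1}, t_l) with t_k - t_{k-1} → 0, the normalized inner product ⟨(I+S)Δg⁰(t_{k-1}), (I+S)Δg⁰(t_{l-1})⟩ / (‖(I+S)Δg⁰(t_{k-1})‖ · ‖(I+S)Δg⁰(t_{l-1})‖) → 0. -/

import Mathlib

open MeasureTheory Set Filter
open scoped Topology

/-- Lebesgue measure on `[0,1]`. -/
noncomputable def μ01 : Measure ℝ := volume.restrict (Icc 0 1)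

/-- The increment `1_{(a,b]}` of `g⁰(t) = 1_{[0,t]}` as an element of `L²([0,1])`. -/
noncomputable def incr (a b : ℝ) : Lp ℝ 2 μ01 :=
  indicatorConstLp 2 (measurableSet_Ioc (a := a) (b := b))
    ((Measure.restrict_apply_le _ _).trans_lt measure_Ioc_lt_top).ne (1 : ℝ)

lemma μ01_Ioc {a b : ℝ} (ha : 0 ≤ a) (hb : b ≤ 1) : μ01 (Ioc a b) = ENNReal.ofReal (b - a) := by
  rw [μ01, Measure.restrict_apply measurableSet_Ioc,
    inter_eq_left.2 (Ioc_subset_Icc_self.trans (Icc_subset_Icc ha hb)), Real.volume_Ioc]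

lemma norm_incr {a b : ℝ} (ha : 0 ≤ a) (hb : b ≤ 1) (hab : a < b) :
    ‖incr a b‖ = (b - a) ^ (1/2 : ℝ) := by
  unfold incr
  refine (norm_indicatorConstLp (by norm_num) (by norm_num)).trans ?_
  rw [measureReal_def, μ01_Ioc ha hb,
    ENNReal.toReal_ofReal (by linarith), norm_one, one_mul]
  norm_num

lemma norm_incr_pos {a b : ℝ} (ha : 0 ≤ a) (hb : b ≤ 1) (hab : a < b) : 0 < ‖incr a b‖ := by
  rw [norm_incr ha hb hab]; exact Real.rpow_pos_of_pos (by linarith) _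

lemma inner_incr_eq (a b : ℝ) (f : Lp ℝ 2 μ01) :
    (inner ℝ (incr a b) f : ℝ) = ∫ x in Ioc a b, f x ∂μ01 :=
  L2.inner_indicatorConstLp_one _ _ f

lemma inner_incr_incr_zero {a b c d : ℝ} (h : b ≤ c ∨ d ≤ a) :
    (inner ℝ (incr a b) (incr c d) : ℝ) = 0 := by
  rw [inner_incr_eq]
  have hcoe : (incr c d : ℝ → ℝ) =ᵐ[μ01] (Ioc c d).indicator (fun _ => (1:ℝ)) :=
    indicatorConstLp_coeFn
  rw [setIntegral_congr_ae measurableSet_Ioc (hcoe.mono fun x hx _ => hx),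
    setIntegral_indicator measurableSet_Ioc]
  have : Ioc a b ∩ Ioc c d = ∅ := by
    rcases h with h | h
    · ext x; simp only [mem_inter_iff, mem_Ioc, mem_empty_iff_false, iff_false]
      rintro ⟨⟨_, h1⟩, h2, _⟩; linarith
    · ext x; simp only [mem_inter_iff, mem_Ioc, mem_empty_iff_false, iff_false]
      rintro ⟨⟨h1, h2⟩, h3, h4⟩; linarith
  rw [this]
  simp

lemma weak_incr (a b : ℕ → ℝ) (hab : ∀ n, 0 ≤ a n ∧ a n < b n ∧ b n ≤ 1)
    (hshrink : Tendsto (fun n => b n - a n) atTop (𝓝 0)) (f : Lp ℝ 2 μ01) :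
    Tendsto (fun n => (inner ℝ (‖incr (a n) (b n)‖⁻¹ • incr (a n) (b n)) f : ℝ))
      atTop (𝓝 0) := by
  have hf : MemLp (⇑f) 2 μ01 := Lp.memLp f
  set E : ℕ → Set ℝ := fun n => Ioc (a n) (b n) with hE
  have hgmem : ∀ n, MemLp ((E n).indicator ⇑f) 2 μ01 := fun n => hf.indicator measurableSet_Ioc
  set g : ℕ → Lp ℝ 2 μ01 := fun n => (hgmem n).toLp _ with hg
  have key : ∀ n, (inner ℝ (‖incr (a n) (b n)‖⁻¹ • incr (a n) (b n)) f : ℝ)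
      = (inner ℝ (‖incr (a n) (b n)‖⁻¹ • incr (a n) (b n)) (g n) : ℝ) := by
    intro n
    rw [real_inner_smul_left, real_inner_smul_left, inner_incr_eq, inner_incr_eq]
    congr 1
    have hcoe : (g n : ℝ → ℝ) =ᵐ[μ01] (E n).indicator ⇑f := (hgmem n).coeFn_toLp
    rw [setIntegral_congr_ae measurableSet_Ioc (hcoe.mono fun x hx _ => hx),
      setIntegral_indicator measurableSet_Ioc, inter_self]
  have hbound : ∀ n, |(inner ℝ (‖incr (a n) (b n)‖⁻¹ • incr (a n) (b n)) (g n) : ℝ)| ≤ ‖g n‖ := by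
    intro n
    refine (abs_real_inner_le_norm _ _).trans ?_
    have h1 : ‖‖incr (a n) (b n)‖⁻¹ • incr (a n) (b n)‖ = 1 := by
      rw [norm_smul, norm_inv, norm_norm, inv_mul_cancel₀
        (norm_incr_pos (hab n).1 (hab n).2.2 (hab n).2.1).ne']
    rw [h1, one_mul]
  have hgz : Tendsto (fun n => ‖g n‖) atTop (𝓝 0) := by
    rw [NormedAddCommGroup.tendsto_atTop]
    intro ε hε
    obtain ⟨δ, hδpos, hδ⟩ := hf.eLpNorm_indicator_le one_le_two ENNReal.ofNat_ne_top (half_pos hε)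
    have hev : ∀ᶠ n in atTop, b n - a n < δ := hshrink.eventually (gt_mem_nhds hδpos)
    rw [eventually_atTop] at hev
    obtain ⟨N, hN⟩ := hev
    refine ⟨N, fun n hn => ?_⟩
    have hμ : μ01 (E n) ≤ ENNReal.ofReal δ := by
      rw [hE, μ01_Ioc (hab n).1 (hab n).2.2]
      exact ENNReal.ofReal_le_ofReal (hN n hn).le
    have h2 := hδ (E n) measurableSet_Ioc hμ
    have h3 : ‖g n‖ ≤ ε / 2 := by
      rw [hg, Lp.norm_toLp]
      calc (eLpNorm ((E n).indicator ⇑f) 2 μ01).toReal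
          ≤ (ENNReal.ofReal (ε/2)).toReal := ENNReal.toReal_mono ENNReal.ofReal_ne_top h2
        _ = ε / 2 := ENNReal.toReal_ofReal (half_pos hε).le
    have h4 : (0:ℝ) ≤ ‖g n‖ := norm_nonneg _
    rw [sub_zero, Real.norm_eq_abs, abs_of_nonneg h4]
    linarith
  refine squeeze_zero_norm (fun n => ?_) hgz
  rw [key n, Real.norm_eq_abs]; exact hbound n

section Abstract

variable {H : Type*} [NormedAddCommGroup H] [InnerProductSpace ℝ H]

lemma aux_compact_weak {K : Set H} (hK : IsCompact K) {w : ℕ → H} (hw : ∀ n, w n ∈ K)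
    (hweak : ∀ f : H, Tendsto (fun n => (inner ℝ f (w n) : ℝ)) atTop (𝓝 0)) :
    Tendsto w atTop (𝓝 0) := by
  refine tendsto_of_subseq_tendsto fun ns hns => ?_
  obtain ⟨y, hyK, φ, hφ, hconv⟩ := hK.tendsto_subseq (fun k => hw (ns k))
  have h1 : Tendsto (fun k => (inner ℝ y (w (ns (φ k))) : ℝ)) atTop (𝓝 (inner ℝ y y : ℝ)) :=
    tendsto_const_nhds.inner hconv
  have h2 : Tendsto (fun k => (inner ℝ y (w (ns (φ k))) : ℝ)) atTop (𝓝 0) :=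
    (hweak y).comp (hns.comp hφ.tendsto_atTop)
  have hy : y = 0 := by
    have h3 : (inner ℝ y y : ℝ) = 0 := tendsto_nhds_unique h1 h2
    exact inner_self_eq_zero.mp h3
  exact ⟨φ, hy ▸ hconv⟩

lemma aux_cross {K : Set H} (hK : IsCompact K) {u w : ℕ → H}
    (hu1 : ∀ n, ‖u n‖ ≤ 1) (hw : ∀ n, w n ∈ K)
    (hweak : ∀ f : H, Tendsto (fun n => (inner ℝ (u n) f : ℝ)) atTop (𝓝 0)) :
    Tendsto (fun n => (inner ℝ (u n) (w n) : ℝ)) atTop (𝓝 0) := by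
  refine tendsto_of_subseq_tendsto fun ns hns => ?_
  obtain ⟨y, hyK, φ, hφ, hconv⟩ := hK.tendsto_subseq (fun k => hw (ns k))
  refine ⟨φ, squeeze_zero_norm
    (a := fun k => |(inner ℝ (u (ns (φ k))) y : ℝ)| + ‖w (ns (φ k)) - y‖) (fun k => ?_) ?_⟩
  · have h1 : (inner ℝ (u (ns (φ k))) (w (ns (φ k))) : ℝ)
        = inner ℝ (u (ns (φ k))) y + inner ℝ (u (ns (φ k))) (w (ns (φ k)) - y) := by
      rw [inner_sub_right]; ring
    rw [Real.norm_eq_abs, h1]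
    refine (abs_add_le _ _).trans (add_le_add le_rfl ?_)
    refine (abs_real_inner_le_norm _ _).trans ?_
    calc ‖u (ns (φ k))‖ * ‖w (ns (φ k)) - y‖ ≤ 1 * ‖w (ns (φ k)) - y‖ :=
          mul_le_mul_of_nonneg_right (hu1 _) (norm_nonneg _)
      _ = ‖w (ns (φ k)) - y‖ := one_mul _
  · have h2 : Tendsto (fun k => (inner ℝ (u (ns (φ k))) y : ℝ)) atTop (𝓝 0) :=
      (hweak y).comp (hns.comp hφ.tendsto_atTop)
    have h3 : Tendsto (fun k => ‖w (ns (φ k)) - y‖) atTop (𝓝 0) := by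
      have := (hconv.sub (tendsto_const_nhds (x := y))).norm
      simpa using this
    simpa using h2.abs.add h3

lemma exists_compact_image [NormedSpace ℝ H] {S : H →L[ℝ] H} (h : IsCompactOperator S) :
    ∃ K : Set H, IsCompact K ∧ ∀ x : H, ‖x‖ ≤ 1 → S x ∈ K := by
  obtain ⟨K, hK, hKmem⟩ := h
  obtain ⟨r, hr, hball⟩ := Metric.mem_nhds_iff.mp hKmem
  refine ⟨(fun y => (2/r) • y) '' K, hK.image (continuous_const_smul _), fun x hx => ?_⟩
  have hmem : (r/2) • x ∈ Metric.ball (0:H) r := by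
    rw [Metric.mem_ball, dist_zero_right, norm_smul, Real.norm_eq_abs,
      abs_of_pos (half_pos hr)]
    calc r/2 * ‖x‖ ≤ r/2 * 1 := mul_le_mul_of_nonneg_left hx (half_pos hr).le
      _ < r := by linarith
  refine ⟨S ((r/2) • x), hball hmem, ?_⟩
  show (2/r) • S ((r/2) • x) = S x
  rw [ContinuousLinearMap.map_smul, smul_smul, show (2/r) * (r/2) = 1 by field_simp, one_smul]

end Abstract

theorem normalized_correlation_tendsto_zero
    (S : Lp ℝ 2 μ01 →L[ℝ] Lp ℝ 2 μ01)
    (hScomp : IsCompactOperator S) (hSnorm : ‖S‖ < 1)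
    (a b c d : ℕ → ℝ)
    (hab : ∀ n, 0 ≤ a n ∧ a n < b n ∧ b n ≤ 1)
    (hcd : ∀ n, 0 ≤ c n ∧ c n < d n ∧ d n ≤ 1)
    (hdisj : ∀ n, b n ≤ c n ∨ d n ≤ a n)
    (hshrink : Tendsto (fun n => b n - a n) atTop (𝓝 0)) :
    Tendsto (fun n =>
      (inner ℝ (incr (a n) (b n) + S (incr (a n) (b n)))
             (incr (c n) (d n) + S (incr (c n) (d n))) : ℝ) /
        (‖incr (a n) (b n) + S (incr (a n) (b n))‖ *
         ‖incr (c n) (d n) + S (incr (c n) (d n))‖)) atTop (𝓝 0) := by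
  obtain ⟨K, hK, hKmem⟩ := exists_compact_image hScomp
  have hun : ∀ n, 0 < ‖incr (a n) (b n)‖ :=
    fun n => norm_incr_pos (hab n).1 (hab n).2.2 (hab n).2.1
  have hvn : ∀ n, 0 < ‖incr (c n) (d n)‖ :=
    fun n => norm_incr_pos (hcd n).1 (hcd n).2.2 (hcd n).2.1
  set U : ℕ → Lp ℝ 2 μ01 := fun n => ‖incr (a n) (b n)‖⁻¹ • incr (a n) (b n) with hU
  set V : ℕ → Lp ℝ 2 μ01 := fun n => ‖incr (c n) (d n)‖⁻¹ • incr (c n) (d n) with hV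
  have hU1 : ∀ n, ‖U n‖ = 1 := fun n => by
    rw [hU, norm_smul, norm_inv, norm_norm, inv_mul_cancel₀ (hun n).ne']
  have hV1 : ∀ n, ‖V n‖ = 1 := fun n => by
    rw [hV, norm_smul, norm_inv, norm_norm, inv_mul_cancel₀ (hvn n).ne']
  have weak_u : ∀ f : Lp ℝ 2 μ01, Tendsto (fun n => (inner ℝ (U n) f : ℝ)) atTop (𝓝 0) :=
    weak_incr a b hab hshrink
  have hSu : Tendsto (fun n => S (U n)) atTop (𝓝 0) := by
    refine aux_compact_weak hK (fun n => hKmem _ (hU1 n).le) (fun f => ?_)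
    have heq : (fun n => (inner ℝ f (S (U n)) : ℝ))
        = fun n => (inner ℝ (U n) ((ContinuousLinearMap.adjoint S) f) : ℝ) := by
      funext n
      rw [← ContinuousLinearMap.adjoint_inner_left, real_inner_comm]
    rw [heq]
    exact weak_u _
  have hSunorm : Tendsto (fun n => ‖S (U n)‖) atTop (𝓝 0) := by
    have := hSu.norm
    simpa using this
  have hcross : Tendsto (fun n => (inner ℝ (U n) (S (V n)) : ℝ)) atTop (𝓝 0) :=
    aux_cross hK (fun n => (hU1 n).le) (fun n => hKmem _ (hV1 n).le) weak_u
  set α : ℝ := 1 - ‖S‖ with hα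
  have hαpos : 0 < α := sub_pos.2 hSnorm
  set B : ℕ → ℝ := fun n => ((1 + ‖S‖) * ‖S (U n)‖ + |(inner ℝ (U n) (S (V n)) : ℝ)|) / (α * α)
    with hB
  have hBz : Tendsto B atTop (𝓝 0) := by
    have h1 : Tendsto (fun n => (1 + ‖S‖) * ‖S (U n)‖ + |(inner ℝ (U n) (S (V n)) : ℝ)|)
        atTop (𝓝 ((1 + ‖S‖) * 0 + |(0:ℝ)|)) :=
      (tendsto_const_nhds.mul hSunorm).add hcross.abs
    have h2 := h1.div_const (α * α)
    have h3 : ((1 + ‖S‖) * 0 + |(0:ℝ)|) / (α * α) = 0 := by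
      rw [mul_zero, abs_zero, add_zero, zero_div]
    exact h3 ▸ h2
  refine squeeze_zero_norm (fun n => ?_) hBz
  -- per-n bound
  have hSUle : ‖S (U n)‖ ≤ ‖S‖ := by
    have := S.le_opNorm (U n); rwa [hU1 n, mul_one] at this
  have hSVle : ‖S (V n)‖ ≤ ‖S‖ := by
    have := S.le_opNorm (V n); rwa [hV1 n, mul_one] at this
  have hUVz : (inner ℝ (U n) (V n) : ℝ) = 0 := by
    rw [hU, hV, real_inner_smul_left, real_inner_smul_right,
      inner_incr_incr_zero (hdisj n), mul_zero, mul_zero]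
  -- denominators
  have hdenU : α ≤ ‖U n + S (U n)‖ := by
    have h1 : ‖U n‖ - ‖-(S (U n))‖ ≤ ‖U n - -(S (U n))‖ := norm_sub_norm_le _ _
    rw [sub_neg_eq_add, norm_neg, hU1 n] at h1
    simp only [hα]
    linarith
  have hdenV : α ≤ ‖V n + S (V n)‖ := by
    have h1 : ‖V n‖ - ‖-(S (V n))‖ ≤ ‖V n - -(S (V n))‖ := norm_sub_norm_le _ _
    rw [sub_neg_eq_add, norm_neg, hV1 n] at h1
    simp only [hα]
    linarith
  -- numerator bound
  have hnum : |(inner ℝ (U n + S (U n)) (V n + S (V n)) : ℝ)|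
      ≤ (1 + ‖S‖) * ‖S (U n)‖ + |(inner ℝ (U n) (S (V n)) : ℝ)| := by
    have hexp : (inner ℝ (U n + S (U n)) (V n + S (V n)) : ℝ)
        = inner ℝ (U n) (V n) + inner ℝ (U n) (S (V n))
          + (inner ℝ (S (U n)) (V n) + inner ℝ (S (U n)) (S (V n))) := by
      rw [inner_add_left, inner_add_right, inner_add_right]
    rw [hexp, hUVz, zero_add]
    have h2 : |(inner ℝ (S (U n)) (V n) : ℝ)| ≤ ‖S (U n)‖ := by
      have := abs_real_inner_le_norm (S (U n)) (V n)
      rwa [hV1 n, mul_one] at this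
    have h3 : |(inner ℝ (S (U n)) (S (V n)) : ℝ)| ≤ ‖S (U n)‖ * ‖S‖ := by
      refine (abs_real_inner_le_norm _ _).trans ?_
      exact mul_le_mul_of_nonneg_left hSVle (norm_nonneg _)
    calc |(inner ℝ (U n) (S (V n)) : ℝ) + ((inner ℝ (S (U n)) (V n) : ℝ)
          + (inner ℝ (S (U n)) (S (V n)) : ℝ))|
        ≤ |(inner ℝ (U n) (S (V n)) : ℝ)| + (|(inner ℝ (S (U n)) (V n) : ℝ)|
          + |(inner ℝ (S (U n)) (S (V n)) : ℝ)|) := by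
          refine (abs_add_le _ _).trans (add_le_add le_rfl (abs_add_le _ _))
      _ ≤ |(inner ℝ (U n) (S (V n)) : ℝ)| + (‖S (U n)‖ + ‖S (U n)‖ * ‖S‖) :=
          add_le_add le_rfl (add_le_add h2 h3)
      _ = (1 + ‖S‖) * ‖S (U n)‖ + |(inner ℝ (U n) (S (V n)) : ℝ)| := by ring
  -- rewrite the expression using normalized vectors
  have hscal : ∀ (x : Lp ℝ 2 μ01), ‖x‖ ≠ 0 →
      x + S x = ‖x‖ • ((‖x‖⁻¹ • x) + S (‖x‖⁻¹ • x)) := by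
    intro x hx
    rw [smul_add, smul_smul, mul_inv_cancel₀ hx, one_smul, ContinuousLinearMap.map_smul,
      smul_smul, mul_inv_cancel₀ hx, one_smul]
  have hu_eq : incr (a n) (b n) + S (incr (a n) (b n))
      = ‖incr (a n) (b n)‖ • (U n + S (U n)) := hscal _ (hun n).ne'
  have hv_eq : incr (c n) (d n) + S (incr (c n) (d n))
      = ‖incr (c n) (d n)‖ • (V n + S (V n)) := hscal _ (hvn n).ne'
  rw [hu_eq, hv_eq, real_inner_smul_left, real_inner_smul_right, norm_smul, norm_smul,
    norm_norm, norm_norm]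
  have hrw : ‖incr (a n) (b n)‖ * (‖incr (c n) (d n)‖
        * (inner ℝ (U n + S (U n)) (V n + S (V n)) : ℝ))
      / (‖incr (a n) (b n)‖ * ‖U n + S (U n)‖ * (‖incr (c n) (d n)‖ * ‖V n + S (V n)‖))
      = (inner ℝ (U n + S (U n)) (V n + S (V n)) : ℝ)
        / (‖U n + S (U n)‖ * ‖V n + S (V n)‖) := by
    rw [show ‖incr (a n) (b n)‖ * ‖U n + S (U n)‖ * (‖incr (c n) (d n)‖ * ‖V n + S (V n)‖)
        = ‖incr (a n) (b n)‖ * ‖incr (c n) (d n)‖ * (‖U n + S (U n)‖ * ‖V n + S (V n)‖) by ring,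
      show ‖incr (a n) (b n)‖ * (‖incr (c n) (d n)‖
          * (inner ℝ (U n + S (U n)) (V n + S (V n)) : ℝ))
        = ‖incr (a n) (b n)‖ * ‖incr (c n) (d n)‖
          * (inner ℝ (U n + S (U n)) (V n + S (V n)) : ℝ) by ring]
    exact mul_div_mul_left _ _ (mul_pos (hun n) (hvn n)).ne'
  rw [hrw]
  rw [Real.norm_eq_abs, abs_div]
  have hdpos : 0 < ‖U n + S (U n)‖ * ‖V n + S (V n)‖ :=
    mul_pos (hαpos.trans_le hdenU) (hαpos.trans_le hdenV)
  rw [abs_of_pos hdpos]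
  refine div_le_div₀ (by positivity) hnum (by positivity) ?_
  exact mul_le_mul hdenU hdenV hαpos.le (norm_nonneg _)
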